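/- Let H be a graph with a proper 3-coloring c using colors {0,1,2} such that no vertex has a monochromatic neighborhood. Fix a vertex v_0 of color 0 and consider any maximal path v_0, v_1, ..., v_ℓ in which the color of v_i is congruent to i mod 3. Then the last vertex v_ℓ has a neighbor v_j on the path with j < ℓ and j ≡ ℓ + 1 (mod 3), yielding a cycle of length ℓ − j + 1 ≡ 0 (mod 3). -/
import Mathlib

lemma z3_aux : ∀ a x y : ZMod 3, x ≠ a → y ≠ a → x ≠ y → x = a + 1 ∨ y = a + 1 := by
  decide

/-- Given a proper 3-coloring with no monochromatic neighborhoods and a maximal path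
`v_0, …, v_ℓ` whose colors follow `i mod 3`, the last vertex has a neighbor `v_j` on the
path with `j < ℓ`, `j ≡ ℓ+1 (mod 3)`, giving a cycle length `ℓ - j + 1` divisible by 3. -/
theorem stmt10 {V : Type*} (H : SimpleGraph V) (c : V → ZMod 3)
    (hc : ∀ u v, H.Adj u v → c u ≠ c v)
    (hmono : ∀ v : V, ¬ ∀ u w : V, H.Adj v u → H.Adj v w → c u = c w)
    (ℓ : ℕ) (f : Fin (ℓ + 1) → V) (hinj : Function.Injective f)
    (hadj : ∀ i : Fin ℓ, H.Adj (f i.castSucc) (f i.succ))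
    (hcol : ∀ i : Fin (ℓ + 1), c (f i) = ((i : ℕ) : ZMod 3))
    (hmax : ¬ ∃ u : V, H.Adj (f (Fin.last ℓ)) u ∧ (∀ i, f i ≠ u) ∧
      c u = ((ℓ + 1 : ℕ) : ZMod 3)) :
    ∃ j : Fin (ℓ + 1), (j : ℕ) < ℓ ∧ H.Adj (f (Fin.last ℓ)) (f j) ∧
      c (f j) = ((ℓ + 1 : ℕ) : ZMod 3) ∧ (ℓ - (j : ℕ) + 1) % 3 = 0 := by
  have h := hmono (f (Fin.last ℓ))
  push_neg at h
  obtain ⟨u, w, hu, hw, huw⟩ := h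
  have hclast : c (f (Fin.last ℓ)) = ((ℓ : ℕ) : ZMod 3) := by
    simpa using hcol (Fin.last ℓ)
  have ht : ((ℓ + 1 : ℕ) : ZMod 3) = c (f (Fin.last ℓ)) + 1 := by
    rw [hclast]; push_cast; ring
  have hu' : c u ≠ c (f (Fin.last ℓ)) := (hc _ _ hu).symm
  have hw' : c w ≠ c (f (Fin.last ℓ)) := (hc _ _ hw).symm
  have hkey : ∃ u' : V, H.Adj (f (Fin.last ℓ)) u' ∧ c u' = ((ℓ + 1 : ℕ) : ZMod 3) := by
    rcases z3_aux (c (f (Fin.last ℓ))) (c u) (c w) hu' hw' huw with h1 | h1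
    · exact ⟨u, hu, by rw [ht]; exact h1⟩
    · exact ⟨w, hw, by rw [ht]; exact h1⟩
  obtain ⟨u', hadj', hcu'⟩ := hkey
  push_neg at hmax
  have hon : ∃ j, f j = u' := by
    by_contra hno
    push_neg at hno
    exact hmax u' hadj' hno hcu'
  obtain ⟨j, hj⟩ := hon
  subst hj
  have hcj : ((j : ℕ) : ZMod 3) = ((ℓ + 1 : ℕ) : ZMod 3) := by
    rw [← hcol j]; exact hcu'
  have hmod : (j : ℕ) % 3 = (ℓ + 1) % 3 := (ZMod.natCast_eq_natCast_iff _ _ _).mp hcj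
  have hjne : (j : ℕ) ≠ ℓ := by
    intro he
    rw [he] at hcj
    have : ((1 : ℕ) : ZMod 3) = 0 := by
      have := hcj.symm
      push_cast at this ⊢
      linear_combination this
    simpa using this
  have hjlt : (j : ℕ) < ℓ := lt_of_le_of_ne (Nat.lt_succ_iff.mp j.isLt) hjne
  exact ⟨j, hjlt, hadj', hcu', by omega⟩
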